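/- Extreme sets form a laminar family: if X and Y are both extreme sets of a weighted undirected graph, then X ∩ Y = ∅, or X ⊆ Y, or Y ⊆ X. Equivalently, it is impossible that X \ Y, Y \ X, and X ∩ Y are all nonempty. -/

import Mathlib

open Finset

/-- The cut value of a set `X` in a weighted undirected graph on vertex set `V`
with edge-weight function `w`: the total weight of edges with exactly one
endpoint in `X`. -/
def cutVal {V : Type*} [Fintype V] [DecidableEq V] (w : V → V → ℝ) (X : Finset V) : ℝ :=
  ∑ u ∈ X, ∑ v ∈ Xᶜ, w u v

/-- A nonempty proper subset `X ⊊ V` is extreme if every nonempty proper subset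
`Y ⊊ X` satisfies `δ(Y) > δ(X)`. -/
def IsExtremeSet {V : Type*} [Fintype V] [DecidableEq V] (w : V → V → ℝ) (X : Finset V) : Prop :=
  X.Nonempty ∧ X ≠ Finset.univ ∧
    ∀ Y : Finset V, Y.Nonempty → Y ⊂ X → cutVal w Y > cutVal w X

section Aux
variable {V : Type*} [Fintype V] [DecidableEq V] (w : V → V → ℝ)

lemma cutVal_eq_sum (X : Finset V) :
    cutVal w X = ∑ u, ∑ v, if u ∈ X ∧ v ∉ X then w u v else 0 := by
  unfold cutVal
  rw [show X = univ.filter (· ∈ X) by simp,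
    show (univ.filter (· ∈ X))ᶜ = univ.filter (· ∉ X) by ext x; simp]
  rw [Finset.sum_filter]
  congr 1; ext u
  rw [Finset.sum_filter]
  split_ifs with h
  · congr 1; ext v; split_ifs <;> simp_all
  · symm; apply Finset.sum_eq_zero; intro v _; simp [h]

lemma two_cutVal (hsymm : ∀ u v, w u v = w v u) (X : Finset V) :
    2 * cutVal w X = ∑ u, ∑ v,
      ((if u ∈ X ∧ v ∉ X then w u v else 0) + (if v ∈ X ∧ u ∉ X then w u v else 0)) := by
  rw [Finset.sum_congr rfl (fun u _ => Finset.sum_add_distrib), Finset.sum_add_distrib]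
  rw [← cutVal_eq_sum]
  have : ∑ u, ∑ v, (if v ∈ X ∧ u ∉ X then w u v else 0) = cutVal w X := by
    rw [Finset.sum_comm, cutVal_eq_sum]
    congr 1; ext u; congr 1; ext v
    split_ifs <;> simp [hsymm u v]
  rw [this]; ring

lemma cutVal_posimodular (hsymm : ∀ u v, w u v = w v u) (hnonneg : ∀ u v, 0 ≤ w u v)
    (X Y : Finset V) :
    cutVal w (X \ Y) + cutVal w (Y \ X) ≤ cutVal w X + cutVal w Y := by
  have h2 : 2 * (cutVal w (X \ Y) + cutVal w (Y \ X)) ≤ 2 * (cutVal w X + cutVal w Y) := by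
    rw [mul_add, mul_add, two_cutVal w hsymm, two_cutVal w hsymm, two_cutVal w hsymm,
      two_cutVal w hsymm, ← Finset.sum_add_distrib, ← Finset.sum_add_distrib]
    apply Finset.sum_le_sum
    intro u _
    rw [← Finset.sum_add_distrib, ← Finset.sum_add_distrib]
    apply Finset.sum_le_sum
    intro v _
    have := hnonneg u v
    simp only [Finset.mem_sdiff]
    by_cases h1 : u ∈ X <;> by_cases h2 : u ∈ Y <;> by_cases h3 : v ∈ X <;> by_cases h4 : v ∈ Y <;>
      simp [h1, h2, h3, h4] <;> linarith
  linarith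

end Aux

theorem extreme_sets_laminar {V : Type*} [Fintype V] [DecidableEq V] (w : V → V → ℝ)
    (hsymm : ∀ u v, w u v = w v u) (hnonneg : ∀ u v, 0 ≤ w u v)
    (hdiag : ∀ v, w v v = 0)
    (X Y : Finset V) (hX : IsExtremeSet w X) (hY : IsExtremeSet w Y) :
    X ∩ Y = ∅ ∨ X ⊆ Y ∨ Y ⊆ X := by
  by_contra h
  push_neg at h
  obtain ⟨h1, h2, h3⟩ := h
  have hB : (X ∩ Y).Nonempty := h1
  obtain ⟨b, hb⟩ := hB
  rw [Finset.mem_inter] at hb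
  have hA : (X \ Y).Nonempty := Finset.sdiff_nonempty.mpr h2
  have hC : (Y \ X).Nonempty := Finset.sdiff_nonempty.mpr h3
  have hAX : X \ Y ⊂ X := by
    refine ⟨Finset.sdiff_subset, fun hsub => ?_⟩
    have := hsub hb.1
    simp [hb.2] at this
  have hCY : Y \ X ⊂ Y := by
    refine ⟨Finset.sdiff_subset, fun hsub => ?_⟩
    have := hsub hb.2
    simp [hb.1] at this
  have k1 := hX.2.2 _ hA hAX
  have k2 := hY.2.2 _ hC hCY
  have key := cutVal_posimodular w hsymm hnonneg X Y
  linarith
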